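/- Let A, G : ℝ → ℝ be continuous, let 𝒟 = [a,b] be compact with A(v) ≤ −ν < 0 on 𝒟, fix T_s > 0, and let Ṽ : ℤ → 𝒟. Then for every k ∈ ℤ the series P̄_k = Σ_{m=−∞}^{0} ( Π_{l=m}^{−1} e^{A(Ṽ_{k+l}) T_s} ) · G(Ṽ_{k+m−1}) (with the empty product for m = 0 equal to 1) converges absolutely, the sequence (P̄_k)_{k∈ℤ} is bounded, it satisfies the recursion P̄_{k+1} = e^{A(Ṽ_k) T_s}·P̄_k + G(Ṽ_k) for all k ∈ ℤ, and it is the unique bounded solution of this recursion on all of ℤ; moreover every solution started at any initial value at time k₀ converges to P̄_k as k₀ → −∞. -/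

import Mathlib

/-- unique bounded entire solution, proof of Theorem 2: for
the discrete-time DMS recursion `P̃_{k+1} = e^{A(Ṽ_k)T_s}·P̃_k + G(Ṽ_k)` with a
`𝒟 = [a,b]`-valued input sequence and `A ≤ −ν < 0` on `𝒟`, the series
`P̄_k = Σ_{m=−∞}^0 (Π_{l=m}^{−1} e^{A(Ṽ_{k+l})T_s})·G(Ṽ_{k+m−1})` (written below
with `m = −n`, `n ∈ ℕ`) converges absolutely, is bounded on `ℤ`, satisfies the
recursion on all of `ℤ`, is the unique bounded entire solution, and every
solution started at any value `p` at time `k₀` converges to `P̄_k` as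
`k₀ → −∞`. -/
theorem dms_discrete_unique_bounded_entire_solution
    (A G : ℝ → ℝ) (hAc : Continuous A) (hGc : Continuous G)
    (a b ν Ts : ℝ) (hab : a ≤ b) (hν : 0 < ν) (hTs : 0 < Ts)
    (hAν : ∀ v ∈ Set.Icc a b, A v ≤ -ν)
    (Vt : ℤ → ℝ) (hVt : ∀ k : ℤ, Vt k ∈ Set.Icc a b)
    (Pbar : ℤ → ℝ)
    (hPbar : ∀ k : ℤ, Pbar k = ∑' n : ℕ,
      (∏ j ∈ Finset.range n, Real.exp (A (Vt (k - 1 - (j : ℤ))) * Ts)) *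
        G (Vt (k - 1 - (n : ℤ)))) :
    (∀ k : ℤ, Summable (fun n : ℕ =>
      |(∏ j ∈ Finset.range n, Real.exp (A (Vt (k - 1 - (j : ℤ))) * Ts)) *
        G (Vt (k - 1 - (n : ℤ)))|)) ∧
    (∃ C : ℝ, ∀ k : ℤ, |Pbar k| ≤ C) ∧
    (∀ k : ℤ, Pbar (k + 1) = Real.exp (A (Vt k) * Ts) * Pbar k + G (Vt k)) ∧
    (∀ Q : ℤ → ℝ,
      (∀ k : ℤ, Q (k + 1) = Real.exp (A (Vt k) * Ts) * Q k + G (Vt k)) →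
      (∃ C : ℝ, ∀ k : ℤ, |Q k| ≤ C) → Q = Pbar) ∧
    (∀ (p : ℝ) (Q : ℤ → ℤ → ℝ),
      (∀ k₀ : ℤ, Q k₀ k₀ = p) →
      (∀ k₀ k : ℤ, k₀ ≤ k →
        Q k₀ (k + 1) = Real.exp (A (Vt k) * Ts) * Q k₀ k + G (Vt k)) →
      ∀ k : ℤ, Filter.Tendsto (fun k₀ => Q k₀ k) Filter.atBot (nhds (Pbar k))) := by
  -- setup
  set r : ℝ := Real.exp (-ν * Ts) with hr_def
  have hr0 : 0 < r := Real.exp_pos _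
  have hr1 : r < 1 := by
    rw [hr_def, Real.exp_lt_one_iff]
    nlinarith
  have hexple : ∀ k : ℤ, Real.exp (A (Vt k) * Ts) ≤ r := by
    intro k
    apply Real.exp_le_exp.2
    have := hAν _ (hVt k)
    nlinarith
  have hexppos : ∀ k : ℤ, 0 < Real.exp (A (Vt k) * Ts) := fun _ => Real.exp_pos _
  -- bound on G
  obtain ⟨M, hM⟩ : ∃ M : ℝ, ∀ k : ℤ, |G (Vt k)| ≤ M := by
    obtain ⟨M, hM⟩ := (isCompact_Icc (a := a) (b := b)).exists_bound_of_continuousOn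
      hGc.continuousOn
    exact ⟨M, fun k => by simpa using hM _ (hVt k)⟩
  have hM0 : 0 ≤ M := le_trans (abs_nonneg _) (hM 0)
  -- term bound
  have hprod : ∀ (k : ℤ) (n : ℕ),
      (∏ j ∈ Finset.range n, Real.exp (A (Vt (k - 1 - (j : ℤ))) * Ts)) ≤ r ^ n := by
    intro k n
    calc (∏ j ∈ Finset.range n, Real.exp (A (Vt (k - 1 - (j : ℤ))) * Ts))
        ≤ ∏ j ∈ Finset.range n, r := by
          apply Finset.prod_le_prod
          · intro i _; exact (hexppos _).le
          · intro i _; exact hexple _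
      _ = r ^ n := by simp
  have hterm : ∀ (k : ℤ) (n : ℕ),
      |(∏ j ∈ Finset.range n, Real.exp (A (Vt (k - 1 - (j : ℤ))) * Ts)) *
        G (Vt (k - 1 - (n : ℤ)))| ≤ M * r ^ n := by
    intro k n
    rw [abs_mul]
    have h1 : |∏ j ∈ Finset.range n, Real.exp (A (Vt (k - 1 - (j : ℤ))) * Ts)| ≤ r ^ n := by
      rw [abs_of_pos (Finset.prod_pos (fun i _ => hexppos _))]
      exact hprod k n
    calc |∏ j ∈ Finset.range n, Real.exp (A (Vt (k - 1 - (j : ℤ))) * Ts)| *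
          |G (Vt (k - 1 - (n : ℤ)))|
        ≤ r ^ n * M := by
          apply mul_le_mul h1 (hM _) (abs_nonneg _) (pow_nonneg hr0.le n)
      _ = M * r ^ n := by ring
  have hgeo : Summable (fun n : ℕ => M * r ^ n) :=
    (summable_geometric_of_lt_one hr0.le hr1).mul_left M
  -- Part 1: absolute summability
  have part1 : ∀ k : ℤ, Summable (fun n : ℕ =>
      |(∏ j ∈ Finset.range n, Real.exp (A (Vt (k - 1 - (j : ℤ))) * Ts)) *
        G (Vt (k - 1 - (n : ℤ)))|) := by
    intro k
    exact Summable.of_nonneg_of_le (fun n => abs_nonneg _) (hterm k) hgeo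
  have hsumm : ∀ k : ℤ, Summable (fun n : ℕ =>
      (∏ j ∈ Finset.range n, Real.exp (A (Vt (k - 1 - (j : ℤ))) * Ts)) *
        G (Vt (k - 1 - (n : ℤ)))) := fun k => summable_abs_iff.1 (part1 k)
  -- Part 2: boundedness
  have part2 : ∀ k : ℤ, |Pbar k| ≤ M * (1 - r)⁻¹ := by
    intro k
    rw [hPbar k]
    calc |∑' n : ℕ, (∏ j ∈ Finset.range n, Real.exp (A (Vt (k - 1 - (j : ℤ))) * Ts)) *
          G (Vt (k - 1 - (n : ℤ)))|
        ≤ ∑' n : ℕ, |(∏ j ∈ Finset.range n, Real.exp (A (Vt (k - 1 - (j : ℤ))) * Ts)) *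
          G (Vt (k - 1 - (n : ℤ)))| := by
          simpa only [Real.norm_eq_abs] using norm_tsum_le_tsum_norm (f := fun n : ℕ =>
            (∏ j ∈ Finset.range n, Real.exp (A (Vt (k - 1 - (j : ℤ))) * Ts)) *
              G (Vt (k - 1 - (n : ℤ)))) (by simpa only [Real.norm_eq_abs] using part1 k)
      _ ≤ ∑' n : ℕ, M * r ^ n := Summable.tsum_le_tsum (hterm k) (part1 k) hgeo
      _ = M * (1 - r)⁻¹ := by
          rw [tsum_mul_left, tsum_geometric_of_lt_one hr0.le hr1]
  -- Part 3: recursion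
  have part3 : ∀ k : ℤ, Pbar (k + 1) = Real.exp (A (Vt k) * Ts) * Pbar k + G (Vt k) := by
    intro k
    have hshift : ∀ n : ℕ,
        (∏ j ∈ Finset.range (n + 1), Real.exp (A (Vt (k + 1 - 1 - (j : ℤ))) * Ts)) *
          G (Vt (k + 1 - 1 - ((n : ℤ) + 1))) =
        Real.exp (A (Vt k) * Ts) *
          ((∏ j ∈ Finset.range n, Real.exp (A (Vt (k - 1 - (j : ℤ))) * Ts)) *
            G (Vt (k - 1 - (n : ℤ)))) := by
      intro n
      rw [Finset.prod_range_succ']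
      have h0 : k + 1 - 1 - ((0 : ℕ) : ℤ) = k := by push_cast; ring
      have hG : k + 1 - 1 - ((n : ℤ) + 1) = k - 1 - (n : ℤ) := by ring
      have hj : ∀ j : ℕ, k + 1 - 1 - ((j + 1 : ℕ) : ℤ) = k - 1 - (j : ℤ) := by
        intro j; push_cast; ring
      simp only [h0, hG, hj]
      ring
    rw [hPbar (k + 1), hPbar k]
    rw [Summable.tsum_eq_zero_add (hsumm (k + 1))]
    have hz : (∏ j ∈ Finset.range 0, Real.exp (A (Vt (k + 1 - 1 - (j : ℤ))) * Ts)) *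
        G (Vt (k + 1 - 1 - ((0 : ℕ) : ℤ))) = G (Vt k) := by
      simp
    rw [hz]
    have : (∑' n : ℕ, (∏ j ∈ Finset.range (n + 1),
        Real.exp (A (Vt (k + 1 - 1 - (j : ℤ))) * Ts)) *
          G (Vt (k + 1 - 1 - ((n + 1 : ℕ) : ℤ)))) =
        Real.exp (A (Vt k) * Ts) * ∑' n : ℕ,
          (∏ j ∈ Finset.range n, Real.exp (A (Vt (k - 1 - (j : ℤ))) * Ts)) *
            G (Vt (k - 1 - (n : ℤ))) := by
      rw [← tsum_mul_left]
      congr 1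
      funext n
      have := hshift n
      push_cast at this ⊢
      exact this
    rw [this]
    ring
  -- Part 4: uniqueness
  have part4 : ∀ Q : ℤ → ℝ,
      (∀ k : ℤ, Q (k + 1) = Real.exp (A (Vt k) * Ts) * Q k + G (Vt k)) →
      (∃ C : ℝ, ∀ k : ℤ, |Q k| ≤ C) → Q = Pbar := by
    intro Q hQrec ⟨C, hC⟩
    have hD : ∀ k : ℤ, Q (k + 1) - Pbar (k + 1) =
        Real.exp (A (Vt k) * Ts) * (Q k - Pbar k) := by
      intro k; rw [hQrec k, part3 k]; ring
    have hC2 : ∀ k : ℤ, |Q k - Pbar k| ≤ C + M * (1 - r)⁻¹ := by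
      intro k
      calc |Q k - Pbar k| ≤ |Q k| + |Pbar k| := abs_sub _ _
        _ ≤ C + M * (1 - r)⁻¹ := add_le_add (hC k) (part2 k)
    have key : ∀ (n : ℕ) (k : ℤ), |Q k - Pbar k| ≤ r ^ n * (C + M * (1 - r)⁻¹) := by
      intro n
      induction n with
      | zero => intro k; simpa using hC2 k
      | succ n ih =>
        intro k
        have hk : k = (k - 1) + 1 := by ring
        rw [hk, hD (k - 1), abs_mul, abs_of_pos (hexppos _)]
        calc Real.exp (A (Vt (k - 1)) * Ts) * |Q (k - 1) - Pbar (k - 1)|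
            ≤ r * (r ^ n * (C + M * (1 - r)⁻¹)) := by
              apply mul_le_mul (hexple _) (ih (k - 1)) (abs_nonneg _) hr0.le
          _ = r ^ (n + 1) * (C + M * (1 - r)⁻¹) := by ring
    funext k
    have h0 : |Q k - Pbar k| ≤ 0 := by
      have htend : Filter.Tendsto (fun n : ℕ => r ^ n * (C + M * (1 - r)⁻¹))
          Filter.atTop (nhds 0) := by
        have := (tendsto_pow_atTop_nhds_zero_of_lt_one hr0.le hr1).mul_const
          (C + M * (1 - r)⁻¹)
        simpa using this
      exact ge_of_tendsto' htend (fun n => key n k)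
    have := abs_nonneg (Q k - Pbar k)
    have : Q k - Pbar k = 0 := abs_eq_zero.1 (le_antisymm h0 this)
    linarith
  refine ⟨part1, ⟨M * (1 - r)⁻¹, part2⟩, part3, part4, ?_⟩
  -- Part 5: convergence
  intro p Q hQ0 hQrec k
  set C3 : ℝ := |p| + M * (1 - r)⁻¹ with hC3def
  have key0 : ∀ (n : ℕ) (k₀ : ℤ), |Q k₀ (k₀ + (n : ℤ)) - Pbar (k₀ + (n : ℤ))| ≤ r ^ n * C3 := by
    intro n
    induction n with
    | zero =>
      intro k₀
      simp only [Nat.cast_zero, add_zero, pow_zero, one_mul, hQ0 k₀, hC3def]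
      calc |p - Pbar k₀| ≤ |p| + |Pbar k₀| := abs_sub _ _
        _ ≤ |p| + M * (1 - r)⁻¹ := add_le_add (le_refl _) (part2 k₀)
    | succ n ih =>
      intro k₀
      have hk : (k₀ : ℤ) + ((n + 1 : ℕ) : ℤ) = (k₀ + (n : ℤ)) + 1 := by push_cast; ring
      rw [hk, hQrec k₀ (k₀ + (n : ℤ)) (by omega), part3]
      have h1 : Real.exp (A (Vt (k₀ + (n : ℤ))) * Ts) * Q k₀ (k₀ + (n : ℤ)) +
          G (Vt (k₀ + (n : ℤ))) -
          (Real.exp (A (Vt (k₀ + (n : ℤ))) * Ts) * Pbar (k₀ + (n : ℤ)) +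
            G (Vt (k₀ + (n : ℤ)))) =
          Real.exp (A (Vt (k₀ + (n : ℤ))) * Ts) *
            (Q k₀ (k₀ + (n : ℤ)) - Pbar (k₀ + (n : ℤ))) := by ring
      rw [h1, abs_mul, abs_of_pos (hexppos _)]
      calc Real.exp (A (Vt (k₀ + (n : ℤ))) * Ts) *
            |Q k₀ (k₀ + (n : ℤ)) - Pbar (k₀ + (n : ℤ))|
          ≤ r * (r ^ n * C3) := mul_le_mul (hexple _) (ih k₀) (abs_nonneg _) hr0.le
        _ = r ^ (n + 1) * C3 := by ring
  have key : ∀ k₀ k : ℤ, k₀ ≤ k → |Q k₀ k - Pbar k| ≤ r ^ (k - k₀).toNat * C3 := by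
    intro k₀ k hk
    obtain ⟨n, hn⟩ : ∃ n : ℕ, k = k₀ + (n : ℤ) := ⟨(k - k₀).toNat, by omega⟩
    subst hn
    have ht : (k₀ + (n : ℤ) - k₀).toNat = n := by omega
    rw [ht]
    exact key0 n k₀
  have hC30 : 0 ≤ C3 := by
    have h3 : 0 ≤ M * (1 - r)⁻¹ := le_trans (abs_nonneg _) (part2 k)
    rw [hC3def]
    exact add_nonneg (abs_nonneg p) h3
  have htoNat : Filter.Tendsto (fun k₀ : ℤ => (k - k₀).toNat) Filter.atBot Filter.atTop := by
    rw [Filter.tendsto_atTop]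
    intro N
    rw [Filter.eventually_atBot]
    exact ⟨k - N, fun k₀ hk₀ => by omega⟩
  have htend0 : Filter.Tendsto (fun k₀ : ℤ => r ^ (k - k₀).toNat * C3)
      Filter.atBot (nhds 0) := by
    have h := ((tendsto_pow_atTop_nhds_zero_of_lt_one hr0.le hr1).mul_const C3).comp htoNat
    simpa [Function.comp_def] using h
  have hsq : Filter.Tendsto (fun k₀ : ℤ => Q k₀ k - Pbar k) Filter.atBot (nhds 0) := by
    apply squeeze_zero_norm' _ htend0
    rw [Filter.eventually_atBot]
    exact ⟨k, fun k₀ hk₀ => by simpa [Real.norm_eq_abs] using key k₀ k hk₀⟩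
  have := hsq.add_const (Pbar k)
  simpa using this
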